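/- Let I ⊆ ℂ[z₁,…,z_d] and J ⊆ ℂ[z₁,…,z_{d'}] be homogeneous ideals, and set Z(I) = V(I) ∩ closed unit ball of ℂ^d and Z(J) = V(J) ∩ closed unit ball of ℂ^{d'}. Let F : ℂ^{d'} → ℂ^d be continuous on the closed unit ball, ℂ-differentiable (holomorphic) on the open unit ball, with F(0) = 0 and F(Z(J)) ⊆ Z(I); let G : ℂ^d → ℂ^{d'} be continuous on the closed unit ball, holomorphic on the open unit ball, with G(Z(I)) ⊆ Z(J). If F(G(z)) = z for all z ∈ Z(I) and G(F(z)) = z for all z ∈ Z(J), then there exists a ℂ-linear map A : ℂ^{d'} → ℂ^d such that F(z) = A z for all z ∈ Z(J). -/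

import Mathlib

open MvPolynomial Metric Set Filter

noncomputable section

/-- `Cd d` is ℂ^d with the Euclidean (Hermitian) norm. -/
abbrev Cd (d : ℕ) := EuclideanSpace ℂ (Fin d)

/-- The zero locus `V(I)` of an ideal of polynomials. -/
def VI {d : ℕ} (I : Ideal (MvPolynomial (Fin d) ℂ)) : Set (Cd d) :=
  {z | ∀ p ∈ I, eval (fun i => z i) p = 0}

/-- `Z(I) = V(I) ∩ closed unit ball`. -/
def ZI {d : ℕ} (I : Ideal (MvPolynomial (Fin d) ℂ)) : Set (Cd d) :=
  VI I ∩ Metric.closedBall 0 1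

/-- An ideal is homogeneous if it contains the homogeneous components of each of
its elements. -/
def IsHomogeneousIdeal {d : ℕ} (I : Ideal (MvPolynomial (Fin d) ℂ)) : Prop :=
  ∀ p ∈ I, ∀ n : ℕ, homogeneousComponent n p ∈ I

lemma eval_smul_homog {σ : Type*} [Fintype σ] {p : MvPolynomial σ ℂ} {n : ℕ}
    (hp : p.IsHomogeneous n) (c : ℂ) (x : σ → ℂ) :
    eval (c • x) p = c ^ n * eval x p := by
  rw [eval_eq', eval_eq', Finset.mul_sum]
  refine Finset.sum_congr rfl fun d hd => ?_
  have hdeg : ∑ i, d i = n := by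
    have h1 := hp (mem_support_iff.mp hd)
    rw [← h1]
    simp [Finsupp.weight, Finsupp.linearCombination, Finsupp.sum]
    exact (Finset.sum_subset (Finset.subset_univ _) (fun i _ hi => by
      simpa using Finsupp.notMem_support_iff.mp hi)).symm
  have : ∀ i : σ, (c • x) i = c * x i := fun i => rfl
  simp_rw [this, mul_pow, Finset.prod_mul_distrib, Finset.prod_pow_eq_pow_sum, hdeg]
  ring

lemma cone_mem {n : ℕ} {I : Ideal (MvPolynomial (Fin n) ℂ)} (hI : IsHomogeneousIdeal I)
    {z : Cd n} (hz : z ∈ VI I) (c : ℂ) : c • z ∈ VI I := by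
  intro p hp
  have hfun : (fun i => (c • z) i) = c • (fun i => z i) := rfl
  rw [hfun]
  conv_lhs => rw [← sum_homogeneousComponent p]
  rw [map_sum]
  refine Finset.sum_eq_zero fun m _ => ?_
  rw [eval_smul_homog (homogeneousComponent_isHomogeneous m p) c, hz _ (hI p hp m), mul_zero]

lemma dslope_bound {E : Type*} [NormedAddCommGroup E] [NormedSpace ℂ E] {f : ℂ → E} {R : ℝ}
    (hR : 0 < R) (hf : DifferentiableOn ℂ f (ball 0 R)) (h0 : f 0 = 0)
    (hb : ∀ w ∈ ball (0:ℂ) R, ‖f w‖ ≤ 1) {lam : ℂ} (hlam : lam ∈ ball (0:ℂ) R) :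
    ‖dslope f 0 lam‖ ≤ 1 / R := by
  by_contra h
  push_neg at h
  set K := ‖dslope f 0 lam‖ with hK
  have h1 : 1 < R * K := by
    rw [div_lt_iff₀ hR] at h; linarith [h]
  set R₂ := (1 + R * K) / 2 with hR₂
  have hR₂1 : 1 < R₂ := by rw [hR₂]; linarith
  have hR₂2 : R₂ < R * K := by rw [hR₂]; linarith
  have hmaps : Set.MapsTo f (ball 0 R) (ball (f 0) R₂) := by
    intro w hw
    rw [h0, mem_ball_zero_iff]
    exact lt_of_le_of_lt (hb w hw) hR₂1
  have := Complex.norm_dslope_le_div_of_mapsTo_ball hf (hmaps.mono_right ball_subset_closedBall) hlam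
  rw [← hK, le_div_iff₀ hR] at this
  nlinarith

lemma ray_tendsto {n m : ℕ} {f : Cd n → Cd m} (hf : ContinuousOn f (closedBall 0 1))
    {z : Cd n} (hz : ‖z‖ ≤ 1) :
    Tendsto (fun t : ℝ => f ((t:ℂ) • z)) (nhdsWithin 1 (Iio 1)) (nhds (f z)) := by
  have h1 : Tendsto (fun t : ℝ => (t:ℂ) • z) (nhdsWithin (1:ℝ) (Iio 1))
      (nhdsWithin z (closedBall 0 1)) := by
    rw [tendsto_nhdsWithin_iff]
    constructor
    · have hc : Continuous (fun t : ℝ => (t:ℂ) • z) :=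
        (Complex.continuous_ofReal).smul continuous_const
      have := hc.tendsto 1
      simp only [Complex.ofReal_one, one_smul] at this
      exact this.mono_left nhdsWithin_le_nhds
    · have hIoo : Ioo (0:ℝ) 1 ∈ nhdsWithin (1:ℝ) (Iio 1) :=
        Ioo_mem_nhdsLT_of_mem (by constructor <;> norm_num)
      filter_upwards [hIoo] with t ht
      rw [mem_closedBall_zero_iff, norm_smul, Complex.norm_real, Real.norm_eq_abs,
        abs_of_pos ht.1]
      nlinarith [ht.2, hz, norm_nonneg z]
  exact ((hf.continuousWithinAt (mem_closedBall_zero_iff.mpr hz)).tendsto).comp h1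


lemma norm_G_le {d d' : ℕ} {I : Ideal (MvPolynomial (Fin d) ℂ)} {G : Cd d → Cd d'}
    (hI : IsHomogeneousIdeal I)
    (hGc : ContinuousOn G (closedBall 0 1))
    (hGh : DifferentiableOn ℂ G (ball 0 1))
    (hG0 : G 0 = 0)
    (hGb : ∀ z ∈ ZI I, ‖G z‖ ≤ 1)
    {w : Cd d} (hw : w ∈ VI I) (hw1 : ‖w‖ ≤ 1) : ‖G w‖ ≤ ‖w‖ := by
  -- first, the strict case
  have interior : ∀ v : Cd d, v ∈ VI I → v ≠ 0 → ‖v‖ < 1 → ‖G v‖ ≤ ‖v‖ := by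
    intro v hv hv0 hvlt
    have hvpos : 0 < ‖v‖ := norm_pos_iff.mpr hv0
    set R := ‖v‖⁻¹ with hRdef
    have hRpos : 0 < R := inv_pos.mpr hvpos
    have hR1 : 1 < R := (one_lt_inv₀ hvpos).mpr hvlt
    have hmem : ∀ lam : ℂ, lam ∈ ball (0:ℂ) R → lam • v ∈ ball (0 : Cd d) 1 := by
      intro lam hlam
      rw [mem_ball_zero_iff] at hlam ⊢
      rw [norm_smul]
      calc ‖lam‖ * ‖v‖ < R * ‖v‖ := by gcongr
        _ = 1 := inv_mul_cancel₀ hvpos.ne'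
    have hmemZ : ∀ lam : ℂ, lam ∈ ball (0:ℂ) R → lam • v ∈ ZI I := fun lam hlam =>
      ⟨cone_mem hI hv lam, ball_subset_closedBall (hmem lam hlam)⟩
    set g : ℂ → Cd d' := fun lam => G (lam • v) with hgdef
    have hgd : DifferentiableOn ℂ g (ball 0 R) := by
      intro lam hlam
      have h1 : DifferentiableAt ℂ G (lam • v) :=
        hGh.differentiableAt (isOpen_ball.mem_nhds (hmem lam hlam))
      have h2 : DifferentiableAt ℂ (fun l : ℂ => l • v) lam :=
        (differentiableAt_id.smul_const v)
      exact (h1.comp lam h2).differentiableWithinAt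
    have hg0 : g 0 = 0 := by simp [hgdef, hG0]
    have hgb : ∀ lam ∈ ball (0:ℂ) R, ‖g lam‖ ≤ 1 := fun lam hlam => hGb _ (hmemZ lam hlam)
    have h1mem : (1:ℂ) ∈ ball (0:ℂ) R := by
      rw [mem_ball_zero_iff]; simpa using hR1
    have := dslope_bound hRpos hgd hg0 hgb h1mem
    rw [dslope_of_ne _ one_ne_zero, slope_def_module] at this
    simpa [hgdef, hRdef, one_div, hG0] using this
  rcases eq_or_ne w 0 with rfl | hw0
  · simp [hG0]
  rcases lt_or_eq_of_le hw1 with hlt | heq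
  · exact interior w hw hw0 hlt
  · -- boundary case via continuity along the ray
    have h1 : Tendsto (fun t : ℝ => G ((t:ℂ) • w)) (nhdsWithin 1 (Iio 1)) (nhds (G w)) :=
      ray_tendsto hGc hw1
    have h2 : ∀ᶠ t : ℝ in nhdsWithin 1 (Iio 1), ‖G ((t:ℂ) • w)‖ ≤ 1 := by
      have hIoo : Ioo (0:ℝ) 1 ∈ nhdsWithin (1:ℝ) (Iio 1) :=
        Ioo_mem_nhdsLT_of_mem (by constructor <;> norm_num)
      filter_upwards [hIoo] with t ht
      have htv : (t:ℂ) • w ∈ VI I := cone_mem hI hw _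
      have htn : ‖(t:ℂ) • w‖ < 1 := by
        rw [norm_smul, Complex.norm_real, Real.norm_eq_abs, abs_of_pos ht.1, ← heq]
        nlinarith [ht.2, norm_nonneg w, heq.symm ▸ hw1]
      have ht0 : (t:ℂ) ≠ 0 := by exact_mod_cast ht.1.ne'
      have := interior _ htv (smul_ne_zero ht0 hw0) htn
      calc ‖G ((t:ℂ) • w)‖ ≤ ‖(t:ℂ) • w‖ := this
        _ ≤ 1 := htn.le
    have := le_of_tendsto (h1.norm) h2
    rw [← heq] at this
    exact this

lemma key_interior {d d' : ℕ} {I : Ideal (MvPolynomial (Fin d) ℂ)}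
    {J : Ideal (MvPolynomial (Fin d') ℂ)}
    (hI : IsHomogeneousIdeal I) (hJ : IsHomogeneousIdeal J)
    {F : Cd d' → Cd d} {G : Cd d → Cd d'}
    (hFh : DifferentiableOn ℂ F (Metric.ball 0 1))
    (hF0 : F 0 = 0)
    (hFmap : ∀ z ∈ ZI J, F z ∈ ZI I)
    (hGc : ContinuousOn G (Metric.closedBall 0 1))
    (hGh : DifferentiableOn ℂ G (Metric.ball 0 1))
    (hG0 : G 0 = 0)
    (hGmap : ∀ z ∈ ZI I, G z ∈ ZI J)
    (hGF : ∀ z ∈ ZI J, G (F z) = z)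
    {w : Cd d'} (hw : w ∈ VI J) (hw0 : w ≠ 0) (hwlt : ‖w‖ < 1) :
    F w = fderiv ℂ F 0 w := by
  have hGle : ∀ v ∈ VI I, ‖v‖ ≤ 1 → ‖G v‖ ≤ ‖v‖ := fun v hv hv1 =>
    norm_G_le hI hGc hGh hG0 (fun z hz => mem_closedBall_zero_iff.mp (hGmap z hz).2) hv hv1
  have hwpos : 0 < ‖w‖ := norm_pos_iff.mpr hw0
  set R := ‖w‖⁻¹ with hRdef
  have hRpos : 0 < R := inv_pos.mpr hwpos
  have hR1 : 1 < R := (one_lt_inv₀ hwpos).mpr hwlt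
  have hmem : ∀ lam : ℂ, lam ∈ ball (0:ℂ) R → lam • w ∈ ball (0 : Cd d') 1 := by
    intro lam hlam
    rw [mem_ball_zero_iff] at hlam ⊢
    rw [norm_smul]
    calc ‖lam‖ * ‖w‖ < R * ‖w‖ := by gcongr
      _ = 1 := inv_mul_cancel₀ hwpos.ne'
  have hmemZ : ∀ lam : ℂ, lam ∈ ball (0:ℂ) R → lam • w ∈ ZI J := fun lam hlam =>
    ⟨cone_mem hJ hw lam, ball_subset_closedBall (hmem lam hlam)⟩
  set f : ℂ → Cd d := fun lam => F (lam • w) with hfdef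
  have hfd : DifferentiableOn ℂ f (ball 0 R) := by
    intro lam hlam
    have h1 : DifferentiableAt ℂ F (lam • w) :=
      hFh.differentiableAt (isOpen_ball.mem_nhds (hmem lam hlam))
    have h2 : DifferentiableAt ℂ (fun l : ℂ => l • w) lam :=
      (differentiableAt_id.smul_const w)
    exact (h1.comp lam h2).differentiableWithinAt
  have hf0 : f 0 = 0 := by simp [hfdef, hF0]
  have hfb : ∀ lam ∈ ball (0:ℂ) R, ‖f lam‖ ≤ 1 := fun lam hlam =>
    mem_closedBall_zero_iff.mp (hFmap _ (hmemZ lam hlam)).2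
  have hupper : ∀ lam ∈ ball (0:ℂ) R, ‖dslope f 0 lam‖ ≤ ‖w‖ := by
    intro lam hlam
    have := dslope_bound hRpos hfd hf0 hfb hlam
    rwa [hRdef, one_div, inv_inv] at this
  have hlower : ∀ lam ∈ ball (0:ℂ) R, lam ≠ 0 → ‖w‖ ≤ ‖dslope f 0 lam‖ := by
    intro lam hlam hne
    have hZ : lam • w ∈ ZI J := hmemZ lam hlam
    have hFZ : F (lam • w) ∈ ZI I := hFmap _ hZ
    have h1 : ‖G (F (lam • w))‖ ≤ ‖F (lam • w)‖ :=
      hGle _ hFZ.1 (mem_closedBall_zero_iff.mp hFZ.2)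
    rw [hGF _ hZ] at h1
    rw [dslope_of_ne _ hne, slope_def_module]
    have hlampos : 0 < ‖lam‖ := norm_pos_iff.mpr hne
    have : ‖(lam - 0)⁻¹ • (f lam - f 0)‖ = ‖lam‖⁻¹ * ‖f lam‖ := by
      rw [sub_zero, hf0, sub_zero, norm_smul, norm_inv]
    rw [this]
    rw [norm_smul] at h1
    calc ‖w‖ = ‖lam‖⁻¹ * (‖lam‖ * ‖w‖) := (inv_mul_cancel_left₀ hlampos.ne' ‖w‖).symm
      _ ≤ ‖lam‖⁻¹ * ‖f lam‖ := mul_le_mul_of_nonneg_left h1 (inv_nonneg.mpr hlampos.le)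
  have h1mem : (1:ℂ) ∈ ball (0:ℂ) R := by rw [mem_ball_zero_iff]; simpa using hR1
  have hnorm1 : ‖dslope f 0 1‖ = ‖w‖ :=
    le_antisymm (hupper 1 h1mem) (hlower 1 h1mem one_ne_zero)
  have hmax : IsMaxOn (norm ∘ dslope f 0) (ball 0 R) 1 := by
    intro lam hlam
    simp only [Function.comp_apply, Set.mem_setOf_eq]
    rw [hnorm1]
    exact hupper lam hlam
  have hd2 : DifferentiableOn ℂ (dslope f 0) (ball 0 R) :=
    (Complex.differentiableOn_dslope (isOpen_ball.mem_nhds (mem_ball_self hRpos))).mpr hfd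
  have heq := Complex.eqOn_of_isPreconnected_of_isMaxOn_norm
    (convex_ball (0:ℂ) R).isPreconnected isOpen_ball hd2 h1mem hmax
  have e0 : dslope f 0 0 = dslope f 0 1 := heq (mem_ball_self hRpos)
  have hA : HasFDerivAt F (fderiv ℂ F 0) 0 :=
    (hFh.differentiableAt (isOpen_ball.mem_nhds (mem_ball_self one_pos))).hasFDerivAt
  have hs : HasDerivAt (fun l : ℂ => l • w) w 0 := by
    simpa using (hasDerivAt_id (0:ℂ)).smul_const w
  have hderiv : deriv f 0 = fderiv ℂ F 0 w := by
    have hA' : HasFDerivAt F (fderiv ℂ F 0) ((fun l : ℂ => l • w) 0) := by simpa using hA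
    have := hA'.comp_hasDerivAt 0 hs
    simpa [hfdef, Function.comp_def] using this.deriv
  have e1 : dslope f 0 1 = F w := by
    rw [dslope_of_ne _ one_ne_zero, slope_def_module, hf0, sub_zero, sub_zero, inv_one, one_smul,
      hfdef]
    simp
  rw [← e1, ← e0, dslope_same, hderiv]

/-- analogue of Cartan's uniqueness theorem. If `F` is continuous
on the closed unit ball, holomorphic on the open unit ball, maps `0` to `0` and
`Z(J)` into `Z(I)`, and has a similarly defined "inverse" `G` (with
`F ∘ G = id` on `Z(I)` and `G ∘ F = id` on `Z(J)`), then `F` agrees with a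
ℂ-linear map on `Z(J)`. -/
theorem stmt3 {d d' : ℕ} (I : Ideal (MvPolynomial (Fin d) ℂ))
    (J : Ideal (MvPolynomial (Fin d') ℂ))
    (hI : IsHomogeneousIdeal I) (hJ : IsHomogeneousIdeal J)
    (F : Cd d' → Cd d) (G : Cd d → Cd d')
    (hFc : ContinuousOn F (Metric.closedBall 0 1))
    (hFh : DifferentiableOn ℂ F (Metric.ball 0 1))
    (hF0 : F 0 = 0)
    (hFmap : ∀ z ∈ ZI J, F z ∈ ZI I)
    (hGc : ContinuousOn G (Metric.closedBall 0 1))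
    (hGh : DifferentiableOn ℂ G (Metric.ball 0 1))
    (hGmap : ∀ z ∈ ZI I, G z ∈ ZI J)
    (hFG : ∀ z ∈ ZI I, F (G z) = z)
    (hGF : ∀ z ∈ ZI J, G (F z) = z) :
    ∃ A : Cd d' →ₗ[ℂ] Cd d, ∀ z ∈ ZI J, F z = A z := by
  refine ⟨(fderiv ℂ F 0).toLinearMap, ?_⟩
  intro z hz
  obtain ⟨hzV, hz1'⟩ := hz
  have hz1 : ‖z‖ ≤ 1 := mem_closedBall_zero_iff.mp hz1'
  have h0J : (0 : Cd d') ∈ ZI J := by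
    refine ⟨?_, mem_closedBall_self zero_le_one⟩
    have := cone_mem hJ hzV 0
    rwa [zero_smul] at this
  have hG0 : G 0 = 0 := by
    have := hGF 0 h0J
    rwa [hF0] at this
  have key : ∀ w : Cd d', w ∈ VI J → w ≠ 0 → ‖w‖ < 1 → F w = fderiv ℂ F 0 w :=
    fun w hw hw0 hwlt =>
      key_interior hI hJ hFh hF0 hFmap hGc hGh hG0 hGmap hGF hw hw0 hwlt
  rcases eq_or_ne z 0 with rfl | hz0
  · simp [hF0]
  rcases lt_or_eq_of_le hz1 with hlt | heq
  · simpa using key z hzV hz0 hlt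
  · -- boundary case
    have hten : Tendsto (fun t : ℝ => F ((t:ℂ) • z)) (nhdsWithin 1 (Iio 1)) (nhds (F z)) :=
      ray_tendsto hFc hz1
    have hIoo : Ioo (0:ℝ) 1 ∈ nhdsWithin (1:ℝ) (Iio 1) :=
      Ioo_mem_nhdsLT_of_mem (by constructor <;> norm_num)
    have hcong : ∀ᶠ t : ℝ in nhdsWithin 1 (Iio 1),
        F ((t:ℂ) • z) = (t:ℂ) • (fderiv ℂ F 0 z) := by
      filter_upwards [hIoo] with t ht
      have ht0 : (t:ℂ) ≠ 0 := by exact_mod_cast ht.1.ne'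
      have h1 : (t:ℂ) • z ∈ VI J := cone_mem hJ hzV _
      have h3 : ‖(t:ℂ) • z‖ < 1 := by
        rw [norm_smul, Complex.norm_real, Real.norm_eq_abs, abs_of_pos ht.1, ← heq]
        nlinarith [ht.2, norm_nonneg z, heq.symm ▸ hz1]
      rw [key _ h1 (smul_ne_zero ht0 hz0) h3, map_smul]
    have hten2 : Tendsto (fun t : ℝ => (t:ℂ) • (fderiv ℂ F 0 z)) (nhdsWithin 1 (Iio 1))
        (nhds (fderiv ℂ F 0 z)) := by
      have hc : Continuous (fun t : ℝ => (t:ℂ) • (fderiv ℂ F 0 z)) :=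
        (Complex.continuous_ofReal).smul continuous_const
      have := hc.tendsto 1
      simp only [Complex.ofReal_one, one_smul] at this
      exact this.mono_left nhdsWithin_le_nhds
    have := tendsto_nhds_unique (hten.congr' hcong) hten2
    simpa using this
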